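/- Let p be a periodic point of the Bernoulli shift σ on Σ². Then there exists ε₁ > 0 such that every x ∈ Σ² whose positive semitrajectory O₊(x,σ) is contained in N(ε₁, O(p,σ)) belongs to W^s(p). -/

import Mathlib

open Filter

noncomputable section

/-- `shiftZ n ω` is the `n`-th iterate `σⁿ ω` of the Bernoulli shift `(σω)_k = ω_{k+1}`. -/
def shiftZ (n : ℤ) (ω : ℤ → Bool) : ℤ → Bool := fun k => ω (k + n)

/-- The metric on `Σ²`. -/
def dSigma (ω ω' : ℤ → Bool) : ℝ :=
  sSup ((fun k : ℕ => (2 : ℝ) ^ (-(k : ℤ))) ''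
    {k : ℕ | ω (-(k : ℤ) - 1) ≠ ω' (-(k : ℤ) - 1) ∨ ω (k : ℤ) ≠ ω' (k : ℤ)})

/-- The orbit `O(ω,σ) = {σᵏω : k ∈ ℤ}`. -/
def orbitShift (ω : ℤ → Bool) : Set (ℤ → Bool) := Set.range fun n : ℤ => shiftZ n ω

/-- The stable set `W^s(p)` of a periodic point of the Bernoulli shift. -/
def stableSetShift (p : ℤ → Bool) : Set (ℤ → Bool) :=
  {q | ∃ r ∈ orbitShift p,
    Tendsto (fun k : ℕ => dSigma (shiftZ (k : ℤ) q) (shiftZ (k : ℤ) r)) atTop (nhds 0)}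

/-- For a periodic point `p` of the Bernoulli shift there is `ε₁ > 0` such that any point
whose positive semitrajectory stays in the `ε₁`-neighborhood of `O(p,σ)` lies in `W^s(p)`. -/
lemma dSigma_nonneg (ω ω' : ℤ → Bool) : 0 ≤ dSigma ω ω' := by
  apply Real.sSup_nonneg
  rintro x ⟨k, -, rfl⟩
  positivity

lemma dSigma_bddAbove (ω ω' : ℤ → Bool) :
    BddAbove ((fun k : ℕ => (2 : ℝ) ^ (-(k : ℤ))) ''
      {k : ℕ | ω (-(k : ℤ) - 1) ≠ ω' (-(k : ℤ) - 1) ∨ ω (k : ℤ) ≠ ω' (k : ℤ)}) := by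
  refine ⟨1, ?_⟩
  rintro x ⟨k, -, rfl⟩
  have : (2:ℝ) ^ (-(k:ℤ)) ≤ (2:ℝ) ^ (0:ℤ) := by
    apply zpow_le_zpow_right₀ (by norm_num)
    omega
  simpa using this

lemma agree_of_dSigma_lt (ω ω' : ℤ → Bool) (m : ℕ)
    (h : dSigma ω ω' < (2:ℝ)^(-(m:ℤ))) :
    ∀ j : ℤ, -(m:ℤ) - 1 ≤ j → j ≤ m → ω j = ω' j := by
  intro j hj1 hj2
  by_contra hne
  have key : ∃ k : ℕ, (k:ℤ) ≤ m ∧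
      (ω (-(k : ℤ) - 1) ≠ ω' (-(k : ℤ) - 1) ∨ ω (k : ℤ) ≠ ω' (k : ℤ)) := by
    rcases le_or_gt 0 j with hj | hj
    · exact ⟨j.toNat, by omega, Or.inr (by rwa [Int.toNat_of_nonneg hj])⟩
    · refine ⟨(-j-1).toNat, by omega, Or.inl ?_⟩
      have : -((-j-1).toNat : ℤ) - 1 = j := by omega
      rwa [this]
  obtain ⟨k, hk, hne'⟩ := key
  have h1 : (2:ℝ)^(-(k:ℤ)) ≤ dSigma ω ω' :=
    le_csSup (dSigma_bddAbove ω ω') ⟨k, hne', rfl⟩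
  have h2 : (2:ℝ)^(-(m:ℤ)) ≤ (2:ℝ)^(-(k:ℤ)) :=
    zpow_le_zpow_right₀ (by norm_num) (by omega)
  linarith

lemma dSigma_le_of_agree (ω ω' : ℤ → Bool) (K : ℕ)
    (h : ∀ j : ℤ, -(K:ℤ) ≤ j → ω j = ω' j) :
    dSigma ω ω' ≤ (2:ℝ)^(-(K:ℤ)) := by
  apply Real.sSup_le
  · rintro x ⟨k, hk, rfl⟩
    have hkK : (K:ℤ) ≤ k := by
      by_contra hlt
      have h1 : ω (-(k:ℤ) - 1) = ω' (-(k:ℤ) - 1) := h _ (by omega)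
      have h2 : ω (k:ℤ) = ω' (k:ℤ) := h _ (by omega)
      simp only [Set.mem_setOf_eq] at hk
      tauto
    exact zpow_le_zpow_right₀ (by norm_num) (by omega)
  · positivity

lemma periodic_eq (p : ℤ → Bool) (T : ℕ) (hp : ∀ i, p (i + T) = p i)
    (x y : ℤ) (h : (T:ℤ) ∣ x - y) : p x = p y := by
  obtain ⟨c, hc⟩ := h
  have hx : x = y + T * c := by omega
  subst hx
  clear hc
  induction c using Int.induction_on with
  | zero => simp
  | succ c ih =>
      have : y + (T:ℤ) * (c + 1) = (y + T * c) + T := by ring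
      rw [this, hp, ih]
  | pred c ih =>
      have : y + (T:ℤ) * (-c) = (y + T * (-c - 1)) + T := by ring
      rw [show y + (T:ℤ) * (-(c:ℤ) - 1) = (y + T * (-c)) - T by ring]
      have := hp (y + (T:ℤ) * (-(c:ℤ)) - T)
      rw [show y + (T:ℤ) * (-(c:ℤ)) - T + T = y + T * (-c) by ring] at this
      rw [← this]
      exact ih

lemma shift_eq_of_window (p : ℤ → Bool) (T : ℕ) (hT : 0 < T) (hp : ∀ i, p (i + T) = p i)
    (a b : ℤ) (h : ∀ j : ℤ, 0 ≤ j → j < T → p (j + a) = p (j + b)) :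
    ∀ i : ℤ, p (i + a) = p (i + b) := by
  intro i
  have hTne : (T:ℤ) ≠ 0 := by omega
  have hmod1 : 0 ≤ i % T := Int.emod_nonneg i hTne
  have hmod2 : i % T < T := Int.emod_lt_of_pos i (by omega)
  have hed := Int.emod_add_mul_ediv i T
  have hdvd : (T:ℤ) ∣ (i + a) - (i % T + a) := ⟨i / T, by linarith⟩
  have hdvd' : (T:ℤ) ∣ (i % T + b) - (i + b) := by
    refine ⟨-(i / T), ?_⟩
    have hr : (T:ℤ) * -(i / T) = -((T:ℤ) * (i / T)) := by ring
    linarith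
  calc p (i + a) = p (i % T + a) := periodic_eq p T hp _ _ hdvd
    _ = p (i % T + b) := h _ hmod1 hmod2
    _ = p (i + b) := periodic_eq p T hp _ _ hdvd'

theorem shift_local_stable_characterization
    (p : ℤ → Bool) (T : ℕ) (hT : 0 < T) (hp : shiftZ (T : ℤ) p = p) :
    ∃ ε₁ : ℝ, 0 < ε₁ ∧
      ∀ x : ℤ → Bool,
        (∀ k : ℕ, ∃ r ∈ orbitShift p, dSigma (shiftZ (k : ℤ) x) r < ε₁) →
        x ∈ stableSetShift p := by
  have hper : ∀ i : ℤ, p (i + T) = p i := fun i => congrFun hp i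
  refine ⟨(2:ℝ)^(-(T:ℤ)), by positivity, fun x hx => ?_⟩
  choose r hr hlt using hx
  choose n hn using hr
  -- agreement on windows
  have hag : ∀ (k : ℕ) (j : ℤ), -(T:ℤ) - 1 ≤ j → j ≤ T →
      x (j + k) = p (j + n k) := by
    intro k j hj1 hj2
    have hltk : dSigma (shiftZ (k:ℤ) x) (shiftZ (n k) p) < (2:ℝ)^(-(T:ℤ)) := by
      have h := hlt k
      rw [← hn k] at h
      simpa using h
    have := agree_of_dSigma_lt (shiftZ (k:ℤ) x) (shiftZ (n k) p) T hltk j hj1 hj2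
    simpa [shiftZ] using this
  -- consecutive shifts of p coincide
  have hstep : ∀ (k : ℕ) (i : ℤ), p (i + n (k+1)) = p (i + (n k + 1)) := by
    intro k
    apply shift_eq_of_window p T hT hper
    intro j hj0 hjT
    have h1 : x (j + ((k:ℤ)+1)) = p (j + n (k+1)) := by
      have := hag (k+1) j (by omega) (by omega)
      push_cast at this ⊢
      convert this using 2
    have h2 : x ((j+1) + (k:ℤ)) = p ((j+1) + n k) := hag k (j+1) (by omega) (by omega)
    rw [show j + ((k:ℤ)+1) = (j+1) + (k:ℤ) by ring] at h1
    rw [← h1, h2]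
    ring_nf
  have hind : ∀ (k : ℕ) (i : ℤ), p (i + n k) = p (i + (n 0 + k)) := by
    intro k
    induction k with
    | zero => intro i; norm_num
    | succ k ih =>
        intro i
        have := hstep k i
        rw [this, show i + (n k + 1) = (i + 1) + n k by ring, ih (i+1)]
        push_cast
        ring_nf
  -- x coincides with shiftZ (n 0) p on coordinates ≥ -(T+1)
  have hxp : ∀ i : ℤ, -(T:ℤ) - 1 ≤ i → x i = p (i + n 0) := by
    intro i hi
    rcases le_or_gt 0 i with h0 | h0
    · have h1 : x ((0:ℤ) + (i.toNat : ℤ)) = p (0 + n i.toNat) :=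
        hag i.toNat 0 (by omega) (by omega)
      have h2 : p ((0:ℤ) + n i.toNat) = p (0 + (n 0 + i.toNat)) := hind i.toNat 0
      rw [Int.toNat_of_nonneg h0] at h1 h2
      rw [show (0:ℤ) + i = i by ring] at h1
      rw [h1, h2]
      ring_nf
    · have h1 : x (i + ((0:ℕ):ℤ)) = p (i + n 0) := hag 0 i (by omega) (by omega)
      simpa using h1
  refine ⟨shiftZ (n 0) p, ⟨n 0, rfl⟩, ?_⟩
  have hbound : ∀ k : ℕ,
      dSigma (shiftZ (k:ℤ) x) (shiftZ (k:ℤ) (shiftZ (n 0) p)) ≤ (2:ℝ)^(-(k:ℤ)) := by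
    intro k
    apply dSigma_le_of_agree
    intro j hj
    show x (j + k) = p ((j + k) + n 0)
    exact hxp (j + k) (by omega)
  have hzero : Tendsto (fun k : ℕ => (2:ℝ)^(-(k:ℤ))) atTop (nhds 0) := by
    have : (fun k : ℕ => (2:ℝ)^(-(k:ℤ))) = fun k : ℕ => ((2:ℝ)⁻¹)^k := by
      funext k
      rw [zpow_neg, ← zpow_natCast, inv_zpow]
    rw [this]
    exact tendsto_pow_atTop_nhds_zero_of_lt_one (by norm_num) (by norm_num)
  exact squeeze_zero (fun k => dSigma_nonneg _ _) hbound hzero
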